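/- Let c > 0 and let (M_k) be a sequence of Hermitian positive definite complex matrices (of sizes n_k × n_k) with σ_min(M_k) ≥ c for all k. Then tr{(M_k − I) M_k⁻¹ (M_k − I)} → ∞ as k → ∞ if and only if ‖M_k − I‖_F² → ∞ as k → ∞. (Paper's equivalence (21), after Kailath–Weinert, characterizing asymptotically singular detection in the large array regime in terms of the normalized covariance matrix.) -/

import Mathlib

open Matrix Filter
open scoped ComplexOrder

/-- Squared Frobenius norm of a complex matrix: `‖X‖_F² = tr{Xᴴ X}` (a real number). -/
noncomputable def frobSq {m n : ℕ} (X : Matrix (Fin m) (Fin n) ℂ) : ℝ :=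
  (Matrix.trace (Xᴴ * X)).re

lemma diag_trace {m : ℕ} (M : Matrix (Fin m) (Fin m) ℂ) (hM : M.PosDef)
    (hpos : ∀ i, 0 < hM.1.eigenvalues i) :
    (Matrix.trace ((M - 1) * M⁻¹ * (M - 1))).re
        = ∑ i, (hM.1.eigenvalues i - 1)^2 / hM.1.eigenvalues i ∧
      frobSq (M - 1) = ∑ i, (hM.1.eigenvalues i - 1)^2 := by
  set l := hM.1.eigenvalues with hl
  set U : Matrix (Fin m) (Fin m) ℂ := (hM.1.eigenvectorUnitary : Matrix (Fin m) (Fin m) ℂ) with hU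
  have hU1 : star U * U = 1 := Matrix.mem_unitaryGroup_iff'.mp hM.1.eigenvectorUnitary.2
  have hU2 : U * star U = 1 := Matrix.mem_unitaryGroup_iff.mp hM.1.eigenvectorUnitary.2
  set D : Matrix (Fin m) (Fin m) ℂ := diagonal (RCLike.ofReal ∘ l) with hD
  have hspec : M = U * D * star U := hM.1.spectral_theorem
  set E : Matrix (Fin m) (Fin m) ℂ := diagonal (fun i => (l i : ℂ) - 1) with hE
  have hDE : D - 1 = E := by
    rw [hD, hE, ← diagonal_one, diagonal_sub]
    rfl
  have hM1 : M - 1 = U * E * star U := by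
    have h1 : M - 1 = U * D * star U - U * star U := by rw [← hspec, hU2]
    rw [h1, ← hDE]
    noncomm_ring
  set Dinv : Matrix (Fin m) (Fin m) ℂ := diagonal (fun i => (l i : ℂ)⁻¹) with hDinv
  have hMinv : M⁻¹ = U * Dinv * star U := by
    apply Matrix.inv_eq_right_inv
    rw [hspec]
    calc U * D * star U * (U * Dinv * star U)
        = U * (D * (star U * U) * Dinv) * star U := by noncomm_ring
      _ = U * (D * Dinv) * star U := by rw [hU1, mul_one]
      _ = 1 := by
          rw [hD, hDinv, diagonal_mul_diagonal]
          have : (fun i => (RCLike.ofReal ∘ l) i * (l i : ℂ)⁻¹) = fun _ => (1:ℂ) := by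
            funext i
            simp only [Function.comp]
            exact mul_inv_cancel₀ (Complex.ofReal_ne_zero.mpr (hpos i).ne')
          rw [this, diagonal_one, mul_one, hU2]
  have conjtr : ∀ X : Matrix (Fin m) (Fin m) ℂ, Matrix.trace (U * X * star U) = Matrix.trace X := by
    intro X
    rw [Matrix.trace_mul_cycle, hU1, one_mul]
  constructor
  · have : (M - 1) * M⁻¹ * (M - 1) = U * (E * Dinv * E) * star U := by
      rw [hM1, hMinv]
      calc U * E * star U * (U * Dinv * star U) * (U * E * star U)
          = U * (E * (star U * U) * Dinv * (star U * U) * E) * star U := by noncomm_ring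
        _ = U * (E * Dinv * E) * star U := by rw [hU1]; noncomm_ring
    rw [this, conjtr, hE, hDinv, diagonal_mul_diagonal, diagonal_mul_diagonal,
      Matrix.trace_diagonal, Complex.re_sum]
    refine Finset.sum_congr rfl fun i _ => ?_
    have : ((l i : ℂ) - 1) * (l i : ℂ)⁻¹ * ((l i : ℂ) - 1)
        = (((l i - 1)^2 / l i : ℝ) : ℂ) := by
      push_cast
      ring
    rw [this, Complex.ofReal_re]
  · have hherm : (M - 1)ᴴ = M - 1 := by
      rw [Matrix.conjTranspose_sub, hM.1.eq, Matrix.conjTranspose_one]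
    have : (M - 1)ᴴ * (M - 1) = U * (E * E) * star U := by
      rw [hherm, hM1]
      calc U * E * star U * (U * E * star U)
          = U * (E * (star U * U) * E) * star U := by noncomm_ring
        _ = U * (E * E) * star U := by rw [hU1, mul_one]
    rw [frobSq, this, conjtr, hE, diagonal_mul_diagonal, Matrix.trace_diagonal,
      Complex.re_sum]
    refine Finset.sum_congr rfl fun i _ => ?_
    have : ((l i : ℂ) - 1) * ((l i : ℂ) - 1) = (((l i - 1)^2 : ℝ) : ℂ) := by
      push_cast; ring
    rw [this, Complex.ofReal_re]

lemma sqrt_tendsto : Tendsto Real.sqrt atTop atTop := by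
  apply tendsto_atTop_atTop.2
  intro b
  exact ⟨(max b 0)^2, fun a ha => le_trans (le_max_left b 0) (by
    rw [show max b 0 = Real.sqrt ((max b 0)^2) from (Real.sqrt_sq (le_max_right b 0)).symm]
    exact Real.sqrt_le_sqrt ha)⟩

/-- Paper's equivalence (21), after Kailath–Weinert: for a sequence `M_k` of Hermitian
positive definite matrices whose eigenvalues are uniformly bounded below by `c > 0`
(i.e. `σ_min(M_k) ≥ c`), the weighted norms `tr{(M_k − I) M_k⁻¹ (M_k − I)}` diverge
if and only if the Frobenius distances `‖M_k − I‖_F²` diverge. -/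
theorem weighted_norm_tendsto_atTop_iff_frobSq {c : ℝ} (hc : 0 < c)
    (n : ℕ → ℕ) (M : ∀ k, Matrix (Fin (n k)) (Fin (n k)) ℂ)
    (hM : ∀ k, (M k).PosDef)
    (hmin : ∀ k i, c ≤ (hM k).1.eigenvalues i) :
    Tendsto (fun k => (Matrix.trace ((M k - 1) * (M k)⁻¹ * (M k - 1))).re) atTop atTop ↔
      Tendsto (fun k => frobSq (M k - 1)) atTop atTop := by
  have hpos : ∀ k i, 0 < (hM k).1.eigenvalues i := fun k i => lt_of_lt_of_le hc (hmin k i)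
  set l : ∀ k, Fin (n k) → ℝ := fun k => (hM k).1.eigenvalues with hldef
  set W : ℕ → ℝ := fun k => ∑ i, (l k i - 1)^2 / l k i with hWdef
  set F : ℕ → ℝ := fun k => ∑ i, (l k i - 1)^2 with hFdef
  have hW : ∀ k, (Matrix.trace ((M k - 1) * (M k)⁻¹ * (M k - 1))).re = W k :=
    fun k => (diag_trace (M k) (hM k) (hpos k)).1
  have hF : ∀ k, frobSq (M k - 1) = F k := fun k => (diag_trace (M k) (hM k) (hpos k)).2
  have hW0 : ∀ k, 0 ≤ W k := fun k =>
    Finset.sum_nonneg fun i _ => div_nonneg (sq_nonneg _) (hpos k i).le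
  have hF0 : ∀ k, 0 ≤ F k := fun k => Finset.sum_nonneg fun i _ => sq_nonneg _
  have hcW : ∀ k, c * W k ≤ F k := by
    intro k
    rw [hWdef, Finset.mul_sum]
    refine Finset.sum_le_sum fun i _ => ?_
    have h1 : c * ((l k i - 1)^2 / l k i) ≤ l k i * ((l k i - 1)^2 / l k i) :=
      mul_le_mul_of_nonneg_right (hmin k i) (div_nonneg (sq_nonneg _) (hpos k i).le)
    calc c * ((l k i - 1)^2 / l k i) ≤ l k i * ((l k i - 1)^2 / l k i) := h1
      _ = (l k i - 1)^2 := by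
            field_simp
            exact mul_div_cancel_left₀ _ (hpos k i).ne'
  have hsW : ∀ k, Real.sqrt (F k) - 1 ≤ W k := by
    intro k
    set s := Real.sqrt (F k) with hs
    have hs0 : 0 ≤ s := Real.sqrt_nonneg _
    have hs2 : s^2 = F k := Real.sq_sqrt (hF0 k)
    have hlam : ∀ i : Fin (n k), l k i ≤ 1 + s := by
      intro i
      have h1 : (l k i - 1)^2 ≤ F k :=
        Finset.single_le_sum (fun j _ => sq_nonneg (l k j - 1)) (Finset.mem_univ i)
      have h2 : l k i - 1 ≤ s := by
        calc l k i - 1 ≤ |l k i - 1| := le_abs_self _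
          _ = Real.sqrt ((l k i - 1)^2) := (Real.sqrt_sq_eq_abs _).symm
          _ ≤ s := Real.sqrt_le_sqrt h1
      linarith
    have hFW : F k ≤ (1 + s) * W k := by
      rw [hFdef, hWdef, Finset.mul_sum]
      refine Finset.sum_le_sum fun i _ => ?_
      calc (l k i - 1)^2 = (l k i - 1)^2 / l k i * l k i := by
            field_simp
            exact (mul_div_cancel_left₀ _ (hpos k i).ne').symm
        _ ≤ (l k i - 1)^2 / l k i * (1 + s) :=
            mul_le_mul_of_nonneg_left (hlam i) (div_nonneg (sq_nonneg _) (hpos k i).le)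
        _ = (1 + s) * ((l k i - 1)^2 / l k i) := by ring
    nlinarith [hW0 k]
  simp only [hW, hF]
  constructor
  · intro h
    refine tendsto_atTop_mono hcW ?_
    exact h.const_mul_atTop hc
  · intro h
    refine tendsto_atTop_mono hsW ?_
    have : Tendsto (fun k => Real.sqrt (F k)) atTop atTop := sqrt_tendsto.comp h
    exact tendsto_atTop_add_const_right atTop (-1) this |>.congr fun k => by ring
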